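/- Let {I_j : j ∈ ω} be a partition of ω into consecutive finite intervals with |I_j| > j, let n ≤ m and I = I_n ∪ I_{n+1} ∪ ⋯ ∪ I_m, and let T ⊆ 2^I satisfy m(T) · ∏_{j=n}^{m-1} (1 + 2^{-j}) < 1/2 (this holds, e.g., when m(T) ≤ 1/4 and n ≥ 2). Suppose s is a function with domain [n,m] such that s(j) ∈ I_j for each j and C_s ⊆ T, where C_s = {t ∈ 2^I : t(s(j)) = 0 for all j ∈ [n,m]}. Then there exist k ∈ [n,m) and a function t : I_n ∪ ⋯ ∪ I_{k-1} → {0,1} (t = ∅ when k = n) with t(s(j)) = 0 for all j ∈ [n,k) and T[t] ≠ ∅, such that for every t' : I_k → {0,1} with t'(s(k)) = 0 one has m(T[t⌢t']) > (1 + 2^{-k}) · m(T[t]). -/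

import Mathlib

open Set Filter

/- Partial functions `t : 2^I` on a finite interval `I ⊆ ω` are represented as total
functions `ℕ → Bool` that are `false` off `I`; `m(T) = |T| · 2^{-|I|}` is computed
with `Set.ncard`. `T[t]` is represented by the set of members of `T` extending `t`. -/

theorem exists_mass_increasing_coordinate
    (a : ℕ → ℕ) (ha0 : a 0 = 0) (hmono : StrictMono a)
    (hlen : ∀ j, j < a (j+1) - a j)
    (n m : ℕ) (hnm : n ≤ m)
    (T : Set (ℕ → Bool))
    (hTsupp : ∀ t ∈ T, ∀ i, (i < a n ∨ a (m+1) ≤ i) → t i = false)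
    (hT : ((T.ncard : ℝ) / 2 ^ (a (m+1) - a n)) *
      (∏ j ∈ Finset.Ico n m, (1 + (1/2 : ℝ) ^ j)) < 1/2)
    (s : ℕ → ℕ) (hs : ∀ j, n ≤ j → j ≤ m → a j ≤ s j ∧ s j < a (j+1))
    (hCs : ∀ t : ℕ → Bool, (∀ i, (i < a n ∨ a (m+1) ≤ i) → t i = false) →
      (∀ j, n ≤ j → j ≤ m → t (s j) = false) → t ∈ T) :
    ∃ k, n ≤ k ∧ k < m ∧ ∃ t : ℕ → Bool,
      (∀ j, n ≤ j → j < k → t (s j) = false) ∧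
      {w ∈ T | ∀ i, a n ≤ i → i < a k → w i = t i}.Nonempty ∧
      ∀ t' : ℕ → Bool, t' (s k) = false →
        (({w ∈ T | (∀ i, a n ≤ i → i < a k → w i = t i) ∧
            (∀ i, a k ≤ i → i < a (k+1) → w i = t' i)}.ncard : ℝ) /
          2 ^ (a (m+1) - a (k+1))) >
        (1 + (1/2 : ℝ) ^ k) *
          (({w ∈ T | ∀ i, a n ≤ i → i < a k → w i = t i}.ncard : ℝ) /
            2 ^ (a (m+1) - a k)) := by
  by_contra hcon
  push_neg at hcon
  -- T is finite
  have hTfin : T.Finite := by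
    have h1 : Set.InjOn (fun w : ℕ → Bool => (fun i : Fin (a (m+1)) => w i)) T := by
      intro w hw w' hw' h
      funext i
      by_cases hi : i < a (m+1)
      · exact congrFun h ⟨i, hi⟩
      · rw [hTsupp w hw i (Or.inr (by omega)), hTsupp w' hw' i (Or.inr (by omega))]
    exact Set.Finite.of_finite_image (Set.toFinite _) h1
  -- nonemptiness
  have hne : ∀ k, ∀ t : ℕ → Bool, k ≤ m → (∀ j, n ≤ j → j < k → t (s j) = false) →
      {w ∈ T | ∀ i, a n ≤ i → i < a k → w i = t i}.Nonempty := by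
    intro k t hk ht
    refine ⟨fun i => if a n ≤ i ∧ i < a k then t i else false, ?_, ?_⟩
    · apply hCs
      · intro i hi
        rw [if_neg]
        rcases hi with h | h
        · rintro ⟨h1, h2⟩; omega
        · rintro ⟨h1, h2⟩
          have := hmono.monotone (show k ≤ m + 1 by omega)
          omega
      · intro j hj1 hj2
        by_cases hjk : j < k
        · have h1 : a n ≤ s j := le_trans (hmono.monotone hj1) (hs j hj1 hj2).1
          have h2 : s j < a k := lt_of_lt_of_le (hs j hj1 hj2).2 (hmono.monotone hjk)
          rw [if_pos ⟨h1, h2⟩]; exact ht j hj1 hjk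
        · rw [if_neg]
          rintro ⟨h1, h2⟩
          have h3 : a k ≤ a j := hmono.monotone (by omega)
          have := (hs j hj1 hj2).1
          omega
    · intro i h1 h2; exact if_pos ⟨h1, h2⟩
  -- counting lemma
  have hanm : a n ≤ a m := hmono.monotone hnm
  have hamm : a m < a (m+1) := hmono (lt_add_one m)
  have hcount : ∀ t : ℕ → Bool, (∀ j, n ≤ j → j < m → t (s j) = false) →
      (2 ^ (a (m+1) - a m - 1) : ℕ) ≤ {w ∈ T | ∀ i, a n ≤ i → i < a m → w i = t i}.ncard := by
    intro t ht
    have hsm := hs m hnm le_rfl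
    set F : Finset ℕ := (Finset.Ico (a m) (a (m+1))).erase (s m) with hF
    set e : (F → Bool) → (ℕ → Bool) :=
      fun f i => if h : i ∈ F then f ⟨i, h⟩ else if a n ≤ i ∧ i < a m then t i else false with he
    have hFsub : ∀ i ∈ F, a m ≤ i ∧ i < a (m+1) := by
      intro i hi
      simp only [hF, Finset.mem_erase, Finset.mem_Ico] at hi
      exact hi.2
    have hinj : Function.Injective e := by
      intro f f' hff
      funext x
      have h := congrFun hff x.1
      simpa only [he, dif_pos x.2, Subtype.eta] using h
    have hmem : ∀ f : F → Bool, e f ∈ {w ∈ T | ∀ i, a n ≤ i → i < a m → w i = t i} := by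
      intro f
      constructor
      · apply hCs
        · intro i hi
          simp only [he]
          rw [dif_neg, if_neg]
          · rintro ⟨h1, h2⟩; omega
          · intro hiF; have := hFsub i hiF; omega
        · intro j hj1 hj2
          simp only [he]
          by_cases hjm : j < m
          · have h1 : a n ≤ s j := le_trans (hmono.monotone hj1) (hs j hj1 hj2).1
            have h2 : s j < a m := lt_of_lt_of_le (hs j hj1 hj2).2 (hmono.monotone hjm)
            rw [dif_neg, if_pos ⟨h1, h2⟩]
            · exact ht j hj1 hjm
            · intro hiF; have := hFsub _ hiF; omega
          · have hj : j = m := by omega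
            subst hj
            rw [dif_neg, if_neg]
            · rintro ⟨h1, h2⟩; exact absurd hsm.1 (by omega)
            · simp [hF]
      · intro i h1 h2
        simp only [he]
        rw [dif_neg, if_pos ⟨h1, h2⟩]
        intro hiF; have := hFsub _ hiF; omega
    have hsub : Set.range e ⊆ {w ∈ T | ∀ i, a n ≤ i → i < a m → w i = t i} := by
      rintro w ⟨f, rfl⟩; exact hmem f
    have hcard : (Set.range e).ncard = 2 ^ (a (m+1) - a m - 1) := by
      rw [← Set.image_univ, Set.ncard_image_of_injective _ hinj, Set.ncard_univ,
        Nat.card_eq_fintype_card, Fintype.card_fun, Fintype.card_coe, Fintype.card_bool]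
      congr 1
      rw [hF, Finset.card_erase_of_mem (Finset.mem_Ico.2 ⟨hsm.1, hsm.2⟩), Nat.card_Ico]
    calc (2 ^ (a (m+1) - a m - 1) : ℕ) = (Set.range e).ncard := hcard.symm
      _ ≤ _ := Set.ncard_le_ncard hsub (hTfin.subset (Set.sep_subset _ _))
  -- main induction
  have main : ∀ k, n ≤ k → k ≤ m → ∃ t : ℕ → Bool,
      (∀ j, n ≤ j → j < k → t (s j) = false) ∧
      (({w ∈ T | ∀ i, a n ≤ i → i < a k → w i = t i}.ncard : ℝ) / 2 ^ (a (m+1) - a k))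
        ≤ ((T.ncard : ℝ) / 2 ^ (a (m+1) - a n)) * ∏ j ∈ Finset.Ico n k, (1 + (1/2:ℝ) ^ j) := by
    intro k hk
    induction k, hk using Nat.le_induction with
    | base =>
      intro _
      refine ⟨fun _ => false, by omega, ?_⟩
      have hTeq : {w ∈ T | ∀ i, a n ≤ i → i < a n → w i = (fun _ => false) i} = T := by
        ext w
        exact ⟨fun h => h.1, fun h => ⟨h, fun i h1 h2 => absurd h2 (by omega)⟩⟩
      rw [hTeq, Finset.Ico_self, Finset.prod_empty, mul_one]
    | succ k hk ih =>
      intro hk1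
      obtain ⟨t, ht, hb⟩ := ih (by omega)
      obtain ⟨t', ht', hle⟩ := hcon k hk (by omega) t ht (hne k t (by omega) ht)
      set t'' : ℕ → Bool := fun i => if i < a k then t i else t' i with ht''def
      refine ⟨t'', ?_, ?_⟩
      · intro j hj1 hj2
        by_cases hjk : j < k
        · have hsj : s j < a k := lt_of_lt_of_le (hs j hj1 (by omega)).2 (hmono.monotone hjk)
          simp only [ht''def]
          rw [if_pos hsj]; exact ht j hj1 hjk
        · have hj : j = k := by omega
          subst hj
          have hsj : ¬ s j < a j := not_lt.2 (hs j hj1 (by omega)).1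
          simp only [ht''def]
          rw [if_neg hsj]; exact ht'
      · have hseteq : {w ∈ T | ∀ i, a n ≤ i → i < a (k+1) → w i = t'' i} =
            {w ∈ T | (∀ i, a n ≤ i → i < a k → w i = t i) ∧
              (∀ i, a k ≤ i → i < a (k+1) → w i = t' i)} := by
          ext w
          simp only [Set.mem_setOf_eq, ht''def]
          constructor
          · rintro ⟨hw, hagree⟩
            refine ⟨hw, fun i h1 h2 => ?_, fun i h1 h2 => ?_⟩
            · have h3 := hagree i h1 (lt_of_lt_of_le h2 (hmono.monotone (by omega)))
              rwa [if_pos h2] at h3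
            · have hi : a n ≤ i := le_trans (hmono.monotone hk) h1
              have h3 := hagree i hi h2
              rwa [if_neg (not_lt.2 h1)] at h3
          · rintro ⟨hw, h1, h2⟩
            refine ⟨hw, fun i hi1 hi2 => ?_⟩
            by_cases hik : i < a k
            · rw [if_pos hik]; exact h1 i hi1 hik
            · rw [if_neg hik]; exact h2 i (not_lt.1 hik) hi2
        rw [hseteq]
        calc _ ≤ (1 + (1/2:ℝ) ^ k) *
              (({w ∈ T | ∀ i, a n ≤ i → i < a k → w i = t i}.ncard : ℝ) /
                2 ^ (a (m+1) - a k)) := hle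
          _ ≤ (1 + (1/2:ℝ) ^ k) * (((T.ncard : ℝ) / 2 ^ (a (m+1) - a n)) *
              ∏ j ∈ Finset.Ico n k, (1 + (1/2:ℝ) ^ j)) :=
            mul_le_mul_of_nonneg_left hb (by positivity)
          _ = ((T.ncard : ℝ) / 2 ^ (a (m+1) - a n)) *
              ∏ j ∈ Finset.Ico n (k+1), (1 + (1/2:ℝ) ^ j) := by
            rw [Finset.prod_Ico_succ_top hk]; ring
  -- conclusion
  obtain ⟨t, ht, hb⟩ := main m hnm le_rfl
  have hc := hcount t ht
  have hL : 1 ≤ a (m+1) - a m := Nat.lt_of_le_of_lt (Nat.zero_le m) (hlen m)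
  have h2 : (1/2 : ℝ) ≤
      (({w ∈ T | ∀ i, a n ≤ i → i < a m → w i = t i}.ncard : ℝ) / 2 ^ (a (m+1) - a m)) := by
    rw [le_div_iff₀ (by positivity)]
    calc (1/2 : ℝ) * 2 ^ (a (m+1) - a m) = 2 ^ (a (m+1) - a m - 1) := by
          obtain ⟨y, hy⟩ : ∃ y, a (m+1) - a m = y + 1 := ⟨a (m+1) - a m - 1, (Nat.succ_pred_eq_of_pos hL).symm⟩
          rw [hy, Nat.add_sub_cancel, pow_succ]; ring
      _ ≤ _ := by exact_mod_cast hc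
  linarith [lt_of_le_of_lt hb hT]
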